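/- arXiv:2503.08255 — 2 statements merged into one kernel-verified Lean document; each statement's English description precedes it below -/
import Mathlib

section
/- For any unit vector α ∈ ℝ³ and any θ ∈ ℝ with cos θ ≠ −1, the matrix E at the Rodrigues matrix satisfies E(R(α,θ))·E(R(α,θ))ᵀ = I − ((1 − cos θ)/2)·ααᵀ; in particular, E(R(α,θ))·E(R(α,θ))ᵀ·α = ((1 + cos θ)/2)·α, and E(R(α,θ))·E(R(α,θ))ᵀ·v = v for every v ∈ ℝ³ orthogonal to α (so the eigenvalues of E·Eᵀ are 1, 1, and (1 + cos θ)/2). -/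
open Matrix

noncomputable section

/-- The cross (hat) map: `x^×` with `x^× y = x × y`. -/
def cross3 (x : Fin 3 → ℝ) : Matrix (Fin 3) (Fin 3) ℝ :=
  !![0, -x 2, x 1; x 2, 0, -x 0; -x 1, x 0, 0]

/-- The vee map: `A∨ = (A₃₂, A₁₃, A₂₁)`. -/
def vee3 (A : Matrix (Fin 3) (Fin 3) ℝ) : Fin 3 → ℝ :=
  ![A 2 1, A 0 2, A 1 0]

/-- The Rodrigues matrix `R(α,θ) = I + sin θ · α^× + (1-cos θ) · α^×α^×`. -/
def rod (α : Fin 3 → ℝ) (θ : ℝ) : Matrix (Fin 3) (Fin 3) ℝ :=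
  1 + Real.sin θ • cross3 α + (1 - Real.cos θ) • (cross3 α * cross3 α)

/-- The error vector `ψ(R) = ½(R - Rᵀ)∨`. -/
def psi3 (R : Matrix (Fin 3) (Fin 3) ℝ) : Fin 3 → ℝ :=
  (1 / 2 : ℝ) • vee3 (R - Rᵀ)

/-- The generalized error vector `e_R(R) = (1/√(1+tr R)) (R - Rᵀ)∨`. -/
def eR (R : Matrix (Fin 3) (Fin 3) ℝ) : Fin 3 → ℝ :=
  (1 / Real.sqrt (1 + R.trace)) • vee3 (R - Rᵀ)

/-- `E_c(R) = ½((tr R)·I - Rᵀ)`. -/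
def Ec (R : Matrix (Fin 3) (Fin 3) ℝ) : Matrix (Fin 3) (Fin 3) ℝ :=
  (1 / 2 : ℝ) • (R.trace • (1 : Matrix (Fin 3) (Fin 3) ℝ) - Rᵀ)

/-- `E(R) = (1/√(1+tr R))(2E_c(R) + ½ e_R e_Rᵀ)`. -/
def Emat (R : Matrix (Fin 3) (Fin 3) ℝ) : Matrix (Fin 3) (Fin 3) ℝ :=
  (1 / Real.sqrt (1 + R.trace)) •
    ((2 : ℝ) • Ec R + (1 / 2 : ℝ) • vecMulVec (eR R) (eR R))

lemma trace_rod (α : Fin 3 → ℝ) (hα : α 0 ^ 2 + α 1 ^ 2 + α 2 ^ 2 = 1) (θ : ℝ) :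
    (rod α θ).trace = 1 + 2 * Real.cos θ := by
  simp [rod, cross3, Matrix.trace, Fin.sum_univ_three, Matrix.mul_apply,
    Matrix.one_apply, Matrix.add_apply, Matrix.smul_apply]
  linear_combination (-2 * (1 - Real.cos θ)) * hα

set_option maxHeartbeats 1000000 in
lemma step (α : Fin 3 → ℝ) (hα : α 0 ^ 2 + α 1 ^ 2 + α 2 ^ 2 = 1) (θ : ℝ) :
    (2 + 2 * Real.cos θ) • ((2 : ℝ) • Ec (rod α θ)) +
      (1 / 2 : ℝ) • vecMulVec (vee3 (rod α θ - (rod α θ)ᵀ)) (vee3 (rod α θ - (rod α θ)ᵀ)) =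
    (2 + 2 * Real.cos θ) •
      ((1 + Real.cos θ) • (1 : Matrix (Fin 3) (Fin 3) ℝ) + Real.sin θ • cross3 α) := by
  have hs2 : Real.sin θ ^ 2 = 1 - Real.cos θ ^ 2 := by
    have := Real.sin_sq_add_cos_sq θ; linarith
  simp only [Ec, trace_rod α hα θ]
  ext i j
  fin_cases i <;> fin_cases j <;>
    simp [rod, cross3, vee3, vecMulVec, Matrix.mul_apply,
      Fin.sum_univ_three, Matrix.one_apply, Matrix.transpose_apply,
      Matrix.vecHead, Matrix.vecTail, Function.comp]
  all_goals first
    | linear_combination ((2+2*Real.cos θ)*(1-Real.cos θ))*hα + (2*α 0*α 0)*hs2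
    | linear_combination ((2+2*Real.cos θ)*(1-Real.cos θ))*hα + (2*α 1*α 1)*hs2
    | linear_combination ((2+2*Real.cos θ)*(1-Real.cos θ))*hα + (2*α 2*α 2)*hs2
    | linear_combination (2*α 0*α 1)*hs2
    | linear_combination (2*α 0*α 2)*hs2
    | linear_combination (2*α 1*α 2)*hs2

set_option maxHeartbeats 1000000 in
lemma MMT (α : Fin 3 → ℝ) (hα : α 0 ^ 2 + α 1 ^ 2 + α 2 ^ 2 = 1) (θ : ℝ) :
    ((1 + Real.cos θ) • (1 : Matrix (Fin 3) (Fin 3) ℝ) + Real.sin θ • cross3 α) *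
      ((1 + Real.cos θ) • (1 : Matrix (Fin 3) (Fin 3) ℝ) + Real.sin θ • cross3 α)ᵀ =
    (2 + 2 * Real.cos θ) •
      ((1 : Matrix (Fin 3) (Fin 3) ℝ) - ((1 - Real.cos θ) / 2) • vecMulVec α α) := by
  have hs2 : Real.sin θ ^ 2 = 1 - Real.cos θ ^ 2 := by
    have := Real.sin_sq_add_cos_sq θ; linarith
  ext i j
  fin_cases i <;> fin_cases j <;>
    simp [cross3, vecMulVec, Matrix.mul_apply, Fin.sum_univ_three, Matrix.one_apply,
      Matrix.transpose_apply, Matrix.vecHead, Matrix.vecTail, Function.comp]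
  all_goals first
    | linear_combination (Real.sin θ^2)*hα + (1 - α 0*α 0)*hs2
    | linear_combination (Real.sin θ^2)*hα + (1 - α 1*α 1)*hs2
    | linear_combination (Real.sin θ^2)*hα + (1 - α 2*α 2)*hs2
    | linear_combination (-(α 0*α 1))*hs2
    | linear_combination (-(α 0*α 2))*hs2
    | linear_combination (-(α 1*α 2))*hs2

lemma pos2c (θ : ℝ) (hθ : Real.cos θ ≠ -1) : (0:ℝ) < 2 + 2 * Real.cos θ := by
  have := Real.neg_one_le_cos θ
  rcases lt_or_eq_of_le this with h | h
  · linarith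
  · exact absurd h.symm hθ

set_option maxHeartbeats 1000000 in
lemma step2 (α : Fin 3 → ℝ) (hα : α 0 ^ 2 + α 1 ^ 2 + α 2 ^ 2 = 1) (θ : ℝ)
    (hθ : Real.cos θ ≠ -1) :
    (2 : ℝ) • Ec (rod α θ) +
      (1 / (2 * (2 + 2 * Real.cos θ)) : ℝ) •
        vecMulVec (vee3 (rod α θ - (rod α θ)ᵀ)) (vee3 (rod α θ - (rod α θ)ᵀ)) =
    (1 + Real.cos θ) • (1 : Matrix (Fin 3) (Fin 3) ℝ) + Real.sin θ • cross3 α := by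
  have hpos := pos2c θ hθ
  apply smul_right_injective (Matrix (Fin 3) (Fin 3) ℝ) hpos.ne'
  show (2 + 2 * Real.cos θ) • _ = (2 + 2 * Real.cos θ) • _
  rw [smul_add, smul_smul, smul_smul,
    show (2 + 2 * Real.cos θ) * (1 / (2 * (2 + 2 * Real.cos θ))) = (1/2 : ℝ) from by
      rw [mul_one_div, div_eq_iff (ne_of_gt (by linarith))]; ring]
  have h := step α hα θ
  rw [smul_smul] at h
  exact h

lemma Emat_rod (α : Fin 3 → ℝ) (hα : α 0 ^ 2 + α 1 ^ 2 + α 2 ^ 2 = 1) (θ : ℝ)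
    (hθ : Real.cos θ ≠ -1) :
    Emat (rod α θ) = (1 / Real.sqrt (2 + 2 * Real.cos θ)) •
      ((1 + Real.cos θ) • (1 : Matrix (Fin 3) (Fin 3) ℝ) + Real.sin θ • cross3 α) := by
  have hpos := pos2c θ hθ
  set t := Real.sqrt (2 + 2 * Real.cos θ) with htdef
  have ht2 : t ^ 2 = 2 + 2 * Real.cos θ := Real.sq_sqrt hpos.le
  have ht0 : t ≠ 0 := by
    intro h; rw [h] at ht2; simp at ht2; linarith
  have hsq : Real.sqrt (1 + (rod α θ).trace) = t := by
    rw [trace_rod α hα θ, htdef]; ring_nf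
  have hw2 : (1 / 2 : ℝ) • vecMulVec (eR (rod α θ)) (eR (rod α θ)) =
      (1 / (2 * (2 + 2 * Real.cos θ)) : ℝ) •
        vecMulVec (vee3 (rod α θ - (rod α θ)ᵀ)) (vee3 (rod α θ - (rod α θ)ᵀ)) := by
    ext i j
    simp only [Matrix.smul_apply, vecMulVec_apply, eR, hsq, Pi.smul_apply, smul_eq_mul]
    rw [show (2 * (2 + 2 * Real.cos θ) : ℝ) = 2 * t ^ 2 by rw [ht2]]
    ring
  rw [Emat, hsq, hw2]
  congr 1
  exact step2 α hα θ hθ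

/-- `E·Eᵀ = I - ((1-cos θ)/2)·ααᵀ` at the Rodrigues matrix, with the
eigenvector consequences along `α` and orthogonal to `α`. -/
theorem Emat_mul_transpose_rodrigues (α : Fin 3 → ℝ)
    (hα : α 0 ^ 2 + α 1 ^ 2 + α 2 ^ 2 = 1) (θ : ℝ) (hθ : Real.cos θ ≠ -1) :
    Emat (rod α θ) * (Emat (rod α θ))ᵀ =
        (1 : Matrix (Fin 3) (Fin 3) ℝ) - ((1 - Real.cos θ) / 2) • vecMulVec α α ∧
      (Emat (rod α θ) * (Emat (rod α θ))ᵀ) *ᵥ α = ((1 + Real.cos θ) / 2) • α ∧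
      ∀ v : Fin 3 → ℝ, α ⬝ᵥ v = 0 → (Emat (rod α θ) * (Emat (rod α θ))ᵀ) *ᵥ v = v := by
  have hpos := pos2c θ hθ
  have ht2 : Real.sqrt (2 + 2 * Real.cos θ) ^ 2 = 2 + 2 * Real.cos θ := Real.sq_sqrt hpos.le
  have ht0 : Real.sqrt (2 + 2 * Real.cos θ) ≠ 0 := by
    intro h; rw [h] at ht2; simp at ht2; linarith
  have hmain : Emat (rod α θ) * (Emat (rod α θ))ᵀ =
      (1 : Matrix (Fin 3) (Fin 3) ℝ) - ((1 - Real.cos θ) / 2) • vecMulVec α α := by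
    rw [Emat_rod α hα θ hθ, Matrix.transpose_smul, Matrix.smul_mul, Matrix.mul_smul,
      MMT α hα θ, smul_smul, smul_smul]
    rw [show (1 / Real.sqrt (2 + 2*Real.cos θ)) * (1 / Real.sqrt (2 + 2*Real.cos θ)) *
        (2 + 2*Real.cos θ) = 1 by
        rw [div_mul_div_comm, one_mul, ← sq, ht2, one_div_mul_cancel hpos.ne']]
    rw [one_smul]
  have hPα : vecMulVec α α *ᵥ α = α := by
    funext i
    simp [mulVec, vecMulVec, dotProduct, Fin.sum_univ_three]
    linear_combination (α i) * hα
  refine ⟨hmain, ?_, ?_⟩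
  · rw [hmain, Matrix.sub_mulVec, Matrix.one_mulVec, Matrix.smul_mulVec, hPα]
    funext i
    simp [Pi.smul_apply, Pi.sub_apply, smul_eq_mul]
    ring
  · intro v hv
    have h0 : vecMulVec α α *ᵥ v = 0 := by
      funext i
      simp [mulVec, vecMulVec, dotProduct, Fin.sum_univ_three] at hv ⊢
      linear_combination (α i) * hv
    rw [hmain, Matrix.sub_mulVec, Matrix.one_mulVec, Matrix.smul_mulVec, h0,
      smul_zero, sub_zero]
end
end

section
/- Let R̃ ∈ SO(3) with tr R̃ ≠ −1, and let Q₁, Q₂ ∈ ℝ^{3×3} be symmetric positive definite. Then the 6×6 block-diagonal matrix Q_G(R̃) := blkdiag(E(R̃)·Q₁·E(R̃)ᵀ, Q₂) is symmetric positive definite. -/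
open Matrix

noncomputable section

/- ### Auxiliary lemmas -/

lemma cross3_vee3_sub (R : Matrix (Fin 3) (Fin 3) ℝ) :
    cross3 (vee3 (R - Rᵀ)) = R - Rᵀ := by
  ext i j
  fin_cases i <;> fin_cases j <;>
    simp [cross3, vee3, Matrix.sub_apply, Matrix.transpose_apply]

lemma cross3_mulVec_self (v : Fin 3 → ℝ) : cross3 v *ᵥ v = 0 := by
  ext i
  fin_cases i <;> simp [cross3, mulVec, dotProduct, Fin.sum_univ_three] <;> ring

lemma vecMulVec_transpose' (v : Fin 3 → ℝ) : (vecMulVec v v)ᵀ = vecMulVec v v := by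
  ext i j; simp [vecMulVec_apply, Matrix.transpose_apply, mul_comm]

lemma mul_vecMulVec' (A : Matrix (Fin 3) (Fin 3) ℝ) (u w : Fin 3 → ℝ) :
    A * vecMulVec u w = vecMulVec (A *ᵥ u) w := by
  ext i j
  simp [Matrix.mul_apply, vecMulVec_apply, mulVec, dotProduct, Fin.sum_univ_three]
  ring

lemma vecMulVec_mul' (A : Matrix (Fin 3) (Fin 3) ℝ) (u w : Fin 3 → ℝ) :
    vecMulVec u w * A = vecMulVec u (w ᵥ* A) := by
  ext i j
  simp [Matrix.mul_apply, vecMulVec_apply, vecMul, dotProduct, Fin.sum_univ_three]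
  ring

lemma vecMulVec_mul_self (v : Fin 3 → ℝ) :
    vecMulVec v v * vecMulVec v v = (v 0 ^ 2 + v 1 ^ 2 + v 2 ^ 2) • vecMulVec v v := by
  ext i j
  simp [Matrix.mul_apply, vecMulVec_apply, Fin.sum_univ_three, Matrix.smul_apply]
  ring

lemma vecMulVec_smul_smul (a b : ℝ) (u w : Fin 3 → ℝ) :
    vecMulVec (a • u) (b • w) = (a * b) • vecMulVec u w := by
  ext i j
  simp [vecMulVec_apply, Matrix.smul_apply]
  ring

lemma trace_vecMulVec' (v : Fin 3 → ℝ) :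
    (vecMulVec v v).trace = v 0 ^ 2 + v 1 ^ 2 + v 2 ^ 2 := by
  simp [Matrix.trace, Matrix.diag, vecMulVec_apply, Fin.sum_univ_three, sq]

lemma cross3_sq (v : Fin 3 → ℝ) :
    cross3 v * cross3 v = vecMulVec v v - (v 0 ^ 2 + v 1 ^ 2 + v 2 ^ 2) • 1 := by
  ext i j
  fin_cases i <;> fin_cases j <;>
    simp [cross3, vecMulVec_apply, Matrix.mul_apply, Fin.sum_univ_three, Matrix.one_apply,
      Matrix.sub_apply, Matrix.smul_apply] <;> ring

lemma adjugate_eq3 (A : Matrix (Fin 3) (Fin 3) ℝ) :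
    adjugate A = A * A - A.trace • A + ((A.trace ^ 2 - (A * A).trace) / 2) • 1 := by
  rw [adjugate_fin_three]
  ext i j
  fin_cases i <;> fin_cases j <;>
    simp [Matrix.mul_apply, Matrix.trace, Matrix.diag, Fin.sum_univ_three, Matrix.one_apply,
      Matrix.sub_apply, Matrix.add_apply, Matrix.smul_apply] <;> ring

lemma posDef_fromBlocks' {A D : Matrix (Fin 3) (Fin 3) ℝ} (hA : A.PosDef) (hD : D.PosDef) :
    (fromBlocks A 0 0 D).PosDef := by
  rw [posDef_iff_dotProduct_mulVec]
  constructor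
  · show (fromBlocks A 0 0 D)ᴴ = _
    rw [fromBlocks_conjTranspose, conjTranspose_zero, hA.1, hD.1]
  · intro x hx
    have hxd : star x ⬝ᵥ ((fromBlocks A 0 0 D) *ᵥ x) =
        star (x ∘ Sum.inl) ⬝ᵥ (A *ᵥ (x ∘ Sum.inl)) +
          star (x ∘ Sum.inr) ⬝ᵥ (D *ᵥ (x ∘ Sum.inr)) := by
      simp [fromBlocks_mulVec, dotProduct, Fintype.sum_sum_type, Function.comp]
    rw [hxd]
    by_cases h : x ∘ Sum.inl = 0
    · have h2 : x ∘ Sum.inr ≠ 0 := by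
        intro h2
        apply hx
        funext i
        cases i with
        | inl i => exact congrFun h i
        | inr i => exact congrFun h2 i
      have := hD.dotProduct_mulVec_pos h2
      have := hA.posSemidef.dotProduct_mulVec_nonneg (x ∘ Sum.inl)
      linarith
    · have := hA.dotProduct_mulVec_pos h
      have := hD.posSemidef.dotProduct_mulVec_nonneg (x ∘ Sum.inr)
      linarith

set_option maxHeartbeats 2000000 in
/-- `Q_G(R̃)` is symmetric positive definite when `tr R̃ ≠ -1`. -/
theorem QG_posDef (Rt : Matrix (Fin 3) (Fin 3) ℝ)
    (hR1 : Rtᵀ * Rt = 1) (hR2 : Rt * Rtᵀ = 1) (hR3 : Rt.det = 1)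
    (htr : Rt.trace ≠ -1)
    (Q₁ Q₂ : Matrix (Fin 3) (Fin 3) ℝ) (hQ₁ : Q₁.PosDef) (hQ₂ : Q₂.PosDef) :
    (Matrix.fromBlocks (Emat Rt * Q₁ * (Emat Rt)ᵀ) 0 0 Q₂).IsSymm ∧
      (Matrix.fromBlocks (Emat Rt * Q₁ * (Emat Rt)ᵀ) 0 0 Q₂).PosDef := by
  obtain ⟨t, ht⟩ : ∃ a : ℝ, a = Rt.trace := ⟨_, rfl⟩
  rw [← ht] at htr
  obtain ⟨v, hv⟩ : ∃ w : Fin 3 → ℝ, w = vee3 (Rt - Rtᵀ) := ⟨_, rfl⟩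
  obtain ⟨V, hVdef⟩ : ∃ W : Matrix (Fin 3) (Fin 3) ℝ, W = vecMulVec v v := ⟨_, rfl⟩
  obtain ⟨s, hs⟩ : ∃ a : ℝ, a = v 0 ^ 2 + v 1 ^ 2 + v 2 ^ 2 := ⟨_, rfl⟩
  -- the adjugate of a special orthogonal matrix is its transpose
  have hadj : Rtᵀ = adjugate Rt := by
    have h := Matrix.mul_adjugate Rt
    rw [hR3, one_smul] at h
    calc Rtᵀ = Rtᵀ * (Rt * adjugate Rt) := by rw [h, mul_one]
    _ = (Rtᵀ * Rt) * adjugate Rt := by rw [mul_assoc]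
    _ = adjugate Rt := by rw [hR1, one_mul]
  have hsq0 : Rtᵀ = Rt * Rt - t • Rt + ((t ^ 2 - (Rt * Rt).trace) / 2) • 1 := by
    rw [hadj, adjugate_eq3, ← ht]
  have htr2 : (Rt * Rt).trace = t ^ 2 - 2 * t := by
    have h := congrArg Matrix.trace hsq0
    simp [Matrix.trace_add, Matrix.trace_sub, Matrix.trace_smul, Matrix.trace_one,
      Matrix.trace_transpose, smul_eq_mul] at h
    rw [← ht] at h
    linarith
  -- the quadratic Cayley–Hamilton-type identity
  have hsq : Rt * Rt = t • Rt - t • 1 + Rtᵀ := by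
    have hcoef : (t ^ 2 - (t ^ 2 - 2 * t)) / 2 = t := by ring
    rw [hsq0, htr2, hcoef]
    abel
  have hsqT : Rtᵀ * Rtᵀ = t • Rtᵀ - t • 1 + Rt := by
    have h := congrArg Matrix.transpose hsq
    simpa [Matrix.transpose_mul, Matrix.transpose_add, Matrix.transpose_sub,
      Matrix.transpose_smul, Matrix.transpose_one] using h
  have hS : Rt - Rtᵀ = cross3 v := by rw [hv]; exact (cross3_vee3_sub Rt).symm
  have hSv : (Rt - Rtᵀ) *ᵥ v = 0 := by rw [hS]; exact cross3_mulVec_self v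
  have hRTv : Rtᵀ *ᵥ v = Rt *ᵥ v := by
    rw [Matrix.sub_mulVec, sub_eq_zero] at hSv
    exact hSv.symm
  -- (R - Rᵀ)² expansion
  have hSS1 : Rt * Rt + Rtᵀ * Rtᵀ = V - s • 1 + (2 : ℝ) • 1 := by
    have hSS0 : (Rt - Rtᵀ) * (Rt - Rtᵀ) = V - s • 1 := by
      rw [hS, cross3_sq, ← hVdef, ← hs]
    have hexp : (Rt - Rtᵀ) * (Rt - Rtᵀ) =
        Rt * Rt - Rt * Rtᵀ - Rtᵀ * Rt + Rtᵀ * Rtᵀ := by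
      noncomm_ring
    rw [hexp, hR1, hR2] at hSS0
    linear_combination (norm := module) hSS0
  have hCid : (1 + t) • (Rt + Rtᵀ) = V + (2 + 2 * t - s) • (1 : Matrix (Fin 3) (Fin 3) ℝ) := by
    have step : (1 + t) • (Rt + Rtᵀ) =
        (t • Rt - t • 1 + Rtᵀ) + (t • Rtᵀ - t • 1 + Rt) +
          (2 * t) • (1 : Matrix (Fin 3) (Fin 3) ℝ) := by
      module
    rw [step, ← hsq, ← hsqT, hSS1]
    module
  -- |v|² = (3 - t)(1 + t)
  have hv2 : s = (3 - t) * (1 + t) := by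
    have hVtr : V.trace = s := by rw [hVdef, trace_vecMulVec', ← hs]
    have h := congrArg Matrix.trace hCid
    simp [Matrix.trace_add, Matrix.trace_smul, Matrix.trace_one, Matrix.trace_transpose,
      hVtr, ← ht, smul_eq_mul] at h
    linarith
  -- trace bound and positivity of 1 + t
  have ht3 : t ≤ 3 := by
    have h00 := congrFun (congrFun hR2 0) 0
    have h11 := congrFun (congrFun hR2 1) 1
    have h22 := congrFun (congrFun hR2 2) 2
    simp [Matrix.mul_apply, Matrix.transpose_apply, Fin.sum_univ_three, Matrix.one_apply]
      at h00 h11 h22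
    have htt : t = Rt 0 0 + Rt 1 1 + Rt 2 2 := by
      rw [ht]; simp [Matrix.trace, Matrix.diag, Fin.sum_univ_three]
    nlinarith [sq_nonneg (Rt 0 0 - 1), sq_nonneg (Rt 1 1 - 1), sq_nonneg (Rt 2 2 - 1),
      sq_nonneg (Rt 0 1), sq_nonneg (Rt 0 2), sq_nonneg (Rt 1 0), sq_nonneg (Rt 1 2),
      sq_nonneg (Rt 2 0), sq_nonneg (Rt 2 1)]
  have hvnn : 0 ≤ s := by rw [hs]; positivity
  have h1t : 0 < 1 + t := by
    rcases lt_trichotomy (1 + t) 0 with h | h | h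
    · have h3t : (0 : ℝ) < 3 - t := by linarith
      nlinarith [mul_pos h3t (show (0 : ℝ) < -(1 + t) by linarith)]
    · exact absurd (by linarith) htr
    · exact h
  -- R v = v
  have hRv : Rt *ᵥ v = v := by
    have h1 : (Rt * Rt) *ᵥ v = v := by
      rw [← Matrix.mulVec_mulVec, ← hRTv, Matrix.mulVec_mulVec, hR2, Matrix.one_mulVec]
    have h2 := congrArg (fun M => M *ᵥ v) hsq
    simp only [Matrix.add_mulVec, Matrix.sub_mulVec, Matrix.smul_mulVec,
      Matrix.one_mulVec, h1, hRTv] at h2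
    have h3 : (1 + t) • (Rt *ᵥ v) = (1 + t) • v := by
      linear_combination (norm := module) (-1 : ℝ) • h2
    exact smul_right_injective (Fin 3 → ℝ) h1t.ne' h3
  -- products with V
  have hRV : Rtᵀ * V = V := by rw [hVdef, mul_vecMulVec', hRTv, hRv]
  have hVR : V * Rt = V := by
    have hvR : v ᵥ* Rt = v := by
      calc v ᵥ* Rt = v ᵥ* (Rtᵀ)ᵀ := by rw [Matrix.transpose_transpose]
      _ = Rtᵀ *ᵥ v := Matrix.vecMul_transpose _ _
      _ = v := by rw [hRTv, hRv]
    rw [hVdef, vecMulVec_mul', hvR]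
  have hVV : V * V = s • V := by rw [hVdef, vecMulVec_mul_self, ← hs]
  have hC : Rt + Rtᵀ = (t - 1) • 1 + (1 / (1 + t)) • V := by
    have h := hCid
    rw [hv2] at h
    have hrw : Rt + Rtᵀ = (1 / (1 + t)) • ((1 + t) • (Rt + Rtᵀ)) := by
      rw [smul_smul, one_div, inv_mul_cancel₀ h1t.ne', one_smul]
    rw [hrw, h]
    match_scalars <;> field_simp <;> ring
  -- the key identity  M Mᵀ = (1+t) I - ¼ V
  have hM : (t • (1 : Matrix (Fin 3) (Fin 3) ℝ) - Rtᵀ + (1 / (2 * (1 + t))) • V) *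
      (t • (1 : Matrix (Fin 3) (Fin 3) ℝ) - Rt + (1 / (2 * (1 + t))) • V) =
      (1 + t) • (1 : Matrix (Fin 3) (Fin 3) ℝ) - (1 / 4 : ℝ) • V := by
    have hexp : (t • (1 : Matrix (Fin 3) (Fin 3) ℝ) - Rtᵀ + (1 / (2 * (1 + t))) • V) *
        (t • (1 : Matrix (Fin 3) (Fin 3) ℝ) - Rt + (1 / (2 * (1 + t))) • V) =
        (t * t) • (1 : Matrix (Fin 3) (Fin 3) ℝ) - t • (Rt + Rtᵀ) + Rtᵀ * Rt +
          (t * (1 / (2 * (1 + t))) * 2) • V - (1 / (2 * (1 + t))) • (Rtᵀ * V)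
          - (1 / (2 * (1 + t))) • (V * Rt)
          + ((1 / (2 * (1 + t))) * (1 / (2 * (1 + t)))) • (V * V) := by
      simp only [Matrix.add_mul, Matrix.sub_mul, Matrix.mul_add, Matrix.mul_sub,
        Matrix.smul_mul, Matrix.mul_smul, Matrix.one_mul, Matrix.mul_one, smul_smul, smul_add]
      module
    rw [hexp, hR1, hRV, hVR, hVV, hC, smul_smul, hv2]
    match_scalars <;> field_simp <;> ring
  -- expressing Emat
  have hn : (1 / Real.sqrt (1 + t)) * (1 / Real.sqrt (1 + t)) = 1 / (1 + t) := by
    rw [div_mul_div_comm, one_mul, Real.mul_self_sqrt h1t.le]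
  have hEmat : Emat Rt = (1 / Real.sqrt (1 + t)) •
      (t • (1 : Matrix (Fin 3) (Fin 3) ℝ) - Rtᵀ + (1 / (2 * (1 + t))) • V) := by
    simp only [Emat, Ec, eR]
    rw [← ht, ← hv, vecMulVec_smul_smul, hn, ← hVdef]
    match_scalars <;> field_simp <;> ring
  have hMT : (t • (1 : Matrix (Fin 3) (Fin 3) ℝ) - Rtᵀ + (1 / (2 * (1 + t))) • V)ᵀ =
      t • (1 : Matrix (Fin 3) (Fin 3) ℝ) - Rt + (1 / (2 * (1 + t))) • V := by
    rw [Matrix.transpose_add, Matrix.transpose_sub, Matrix.transpose_smul,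
      Matrix.transpose_smul, Matrix.transpose_one, Matrix.transpose_transpose, hVdef,
      vecMulVec_transpose']
  -- E Eᵀ = I - V/(4(1+t))
  have hEE : Emat Rt * (Emat Rt)ᵀ = 1 - (1 / (4 * (1 + t))) • V := by
    rw [hEmat, Matrix.transpose_smul, hMT, Matrix.smul_mul, Matrix.mul_smul, smul_smul,
      hn, hM]
    match_scalars <;> field_simp <;> ring
  -- kernel of Ematᵀ is trivial
  have hker : ∀ x : Fin 3 → ℝ, (Emat Rt)ᵀ *ᵥ x = 0 → x = 0 := by
    intro x hx
    have h0 : x ⬝ᵥ ((Emat Rt * (Emat Rt)ᵀ) *ᵥ x) = 0 := by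
      rw [← Matrix.mulVec_mulVec, hx, Matrix.mulVec_zero, dotProduct_zero]
    rw [hEE] at h0
    have h0' : x ⬝ᵥ x - (1 / (4 * (1 + t))) * (x ⬝ᵥ (V *ᵥ x)) = 0 := by
      rw [Matrix.sub_mulVec, Matrix.one_mulVec, Matrix.smul_mulVec] at h0
      simpa [dotProduct_sub, dotProduct_smul, smul_eq_mul] using h0
    rw [hVdef] at h0'
    -- now a scalar computation
    have hVx : x ⬝ᵥ (vecMulVec v v *ᵥ x) = (v 0 * x 0 + v 1 * x 1 + v 2 * x 2) ^ 2 := by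
      simp [mulVec, vecMulVec_apply, dotProduct, Fin.sum_univ_three]
      ring
    have hxx : x ⬝ᵥ x = x 0 ^ 2 + x 1 ^ 2 + x 2 ^ 2 := by
      simp [dotProduct, Fin.sum_univ_three, sq]
    rw [hVx, hxx] at h0'
    have hCS : (v 0 * x 0 + v 1 * x 1 + v 2 * x 2) ^ 2 ≤
        (3 - t) * (1 + t) * (x 0 ^ 2 + x 1 ^ 2 + x 2 ^ 2) := by
      rw [← hv2, hs]
      nlinarith [sq_nonneg (v 0 * x 1 - v 1 * x 0), sq_nonneg (v 0 * x 2 - v 2 * x 0),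
        sq_nonneg (v 1 * x 2 - v 2 * x 1)]
    have hd : (v 0 * x 0 + v 1 * x 1 + v 2 * x 2) ^ 2 =
        4 * (1 + t) * (x 0 ^ 2 + x 1 ^ 2 + x 2 ^ 2) := by
      field_simp at h0'
      linarith
    have hX : x 0 ^ 2 + x 1 ^ 2 + x 2 ^ 2 ≤ 0 := by
      by_contra hc
      push_neg at hc
      nlinarith [mul_pos h1t hc]
    have e0 : x 0 = 0 := by
      nlinarith [sq_nonneg (x 0), sq_nonneg (x 1), sq_nonneg (x 2)]
    have e1 : x 1 = 0 := by
      nlinarith [sq_nonneg (x 0), sq_nonneg (x 1), sq_nonneg (x 2)]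
    have e2 : x 2 = 0 := by
      nlinarith [sq_nonneg (x 0), sq_nonneg (x 1), sq_nonneg (x 2)]
    funext i
    fin_cases i
    · exact e0
    · exact e1
    · exact e2
  -- positivity of the first block
  have hsemi := hQ₁.posSemidef.mul_mul_conjTranspose_same (Emat Rt)
  rw [Matrix.conjTranspose_eq_transpose_of_trivial] at hsemi
  have hEQ : (Emat Rt * Q₁ * (Emat Rt)ᵀ).PosDef := by
    refine .of_dotProduct_mulVec_pos hsemi.1 (fun x hx => ?_)
    have hne : (Emat Rt)ᵀ *ᵥ x ≠ 0 := fun h => hx (hker x h)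
    have heq : star x ⬝ᵥ ((Emat Rt * Q₁ * (Emat Rt)ᵀ) *ᵥ x) =
        star ((Emat Rt)ᵀ *ᵥ x) ⬝ᵥ (Q₁ *ᵥ ((Emat Rt)ᵀ *ᵥ x)) := by
      rw [← Matrix.mulVec_mulVec, ← Matrix.mulVec_mulVec, Matrix.dotProduct_mulVec,
        Matrix.mulVec_transpose]
      simp
    rw [heq]
    exact hQ₁.dotProduct_mulVec_pos hne
  refine ⟨?_, posDef_fromBlocks' hEQ hQ₂⟩
  have hfull := (posDef_fromBlocks' hEQ hQ₂).1
  show _ᵀ = _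
  rw [← Matrix.conjTranspose_eq_transpose_of_trivial]
  exact hfull
end
end
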